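/- arXiv:1706.06394 — 3 statements merged into one kernel-verified Lean document; each statement's English description precedes it below -/
import Mathlib

section
/- Let γ₁,…,γ_M, λ₁,…,λ_N be real numbers such that the ℚ-linear span of {γ₁,…,γ_M} intersects the ℚ-linear span of {λ₁,…,λ_N} only in {0}. Then, under the identification 𝕋^{M+N} = 𝕋^M × 𝕋^N, one has A(γ₁,…,γ_M,λ₁,…,λ_N) = A(γ₁,…,γ_M) × A(λ₁,…,λ_N), and the normalized Haar measure on A(γ,λ) is the product of the normalized Haar measures on A(γ) and on A(λ). -/
set_option maxHeartbeats 1000000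
set_option synthInstance.maxHeartbeats 1000000

open MeasureTheory

noncomputable section

/-- The one-parameter group homomorphism `y ↦ (y γ₁, …, y γ_N)` from `ℝ` to the torus
`𝕋^N = (ℝ/ℤ)^N`. -/
def orbitHom {N : ℕ} (γ : Fin N → ℝ) : ℝ →+ (Fin N → AddCircle (1 : ℝ)) where
  toFun y := fun i => ((y * γ i : ℝ) : AddCircle (1 : ℝ))
  map_zero' := by funext i; simp
  map_add' x y := by funext i; simp [add_mul]

/-- `A(γ)`: the topological closure in `𝕋^N` of the one-parameter subgroup
`{(yγ₁,…,yγ_N) mod ℤ^N : y ∈ ℝ}`. -/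
def torusSubgroup {N : ℕ} (γ : Fin N → ℝ) : AddSubgroup (Fin N → AddCircle (1 : ℝ)) :=
  (orbitHom γ).range.topologicalClosure

/-- `A(γ,λ)` seen inside `𝕋^{M+N} = 𝕋^M × 𝕋^N`: the topological closure of the
one-parameter subgroup `{(yγ₁,…,yγ_M,yλ₁,…,yλ_N) : y ∈ ℝ}`. -/
def torusSubgroupProd {M N : ℕ} (γ : Fin M → ℝ) (lam : Fin N → ℝ) :
    AddSubgroup ((Fin M → AddCircle (1 : ℝ)) × (Fin N → AddCircle (1 : ℝ))) :=
  ((orbitHom γ).prod (orbitHom lam)).range.topologicalClosure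

/-- `ω` is the normalized Haar measure of the (compact) subgroup `A`:
a probability measure supported on `A` and invariant under translation by elements of `A`. -/
def IsHaarOn {G : Type*} [AddCommGroup G] [TopologicalSpace G] [MeasurableSpace G]
    (A : AddSubgroup G) (ω : Measure G) : Prop :=
  IsProbabilityMeasure ω ∧ ω ((A : Set G)ᶜ) = 0 ∧ ∀ a ∈ A, ω.map (· + a) = ω

namespace Stmt3Aux

open Complex Set
open scoped Real

instance fact01 : Fact ((0:ℝ) < 1) := ⟨one_pos⟩

/-! ### Generic uniqueness of normalized Haar measure on a subgroup -/

theorem haar_unique {G : Type*} [AddCommGroup G] [TopologicalSpace G] [IsTopologicalAddGroup G]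
    [SecondCountableTopology G] [MeasurableSpace G] [BorelSpace G]
    {A : AddSubgroup G} {ω ω' : Measure G}
    (h : IsHaarOn A ω) (h' : IsHaarOn A ω') : ω = ω' := by
  obtain ⟨hp, hc, hi⟩ := h
  obtain ⟨hp', hc', hi'⟩ := h'
  haveI := hp; haveI := hp'
  have hmadd : Measurable (fun p : G × G => p.1 + p.2) := measurable_add
  ext E hE
  have key1 : ((ω.prod ω').map (fun p : G × G => p.1 + p.2)) E = ω' E := by
    rw [Measure.map_apply hmadd hE, Measure.prod_apply (hmadd hE)]
    have h1 : ∀ᵐ x ∂ω, ω' (Prod.mk x ⁻¹' ((fun p : G × G => p.1 + p.2) ⁻¹' E)) = ω' E := by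
      have hxA : ∀ᵐ x ∂ω, x ∈ A := by
        rw [MeasureTheory.ae_iff]
        exact hc
      filter_upwards [hxA] with x hx
      have hset : (Prod.mk x ⁻¹' ((fun p : G × G => p.1 + p.2) ⁻¹' E)) = (· + x) ⁻¹' E := by
        ext y; simp [add_comm]
      rw [hset, ← Measure.map_apply (measurable_add_const x) hE, hi' x hx]
    rw [lintegral_congr_ae h1, lintegral_const, measure_univ, mul_one]
  have key2 : ((ω.prod ω').map (fun p : G × G => p.1 + p.2)) E = ω E := by
    rw [Measure.map_apply hmadd hE, Measure.prod_apply_symm (hmadd hE)]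
    have h1 : ∀ᵐ y ∂ω', ω ((fun x => (x, y)) ⁻¹' ((fun p : G × G => p.1 + p.2) ⁻¹' E)) = ω E := by
      have hyA : ∀ᵐ y ∂ω', y ∈ A := by
        rw [MeasureTheory.ae_iff]
        exact hc'
      filter_upwards [hyA] with y hy
      have hset : ((fun x => (x, y)) ⁻¹' ((fun p : G × G => p.1 + p.2) ⁻¹' E)) = (· + y) ⁻¹' E := by
        ext x; simp
      rw [hset, ← Measure.map_apply (measurable_add_const y) hE, hi y hy]
    rw [lintegral_congr_ae h1, lintegral_const, measure_univ, mul_one]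
  rw [← key2, key1]

/-! ### Characters of the torus -/

lemma fourier_pt_add {T : ℝ} (n : ℤ) (a b : AddCircle T) :
    fourier n (a + b) = fourier n a * fourier n b := by
  simp only [fourier_apply, smul_add, AddCircle.toCircle_add, Circle.coe_mul]

/-- The character of `𝕋^k` attached to `m : ℤ^k`. -/
def tchar {k : ℕ} (m : Fin k → ℤ) : C((Fin k → AddCircle (1:ℝ)), ℂ) where
  toFun u := ∏ i, fourier (m i) (u i)
  continuous_toFun := continuous_finset_prod _ fun i _ =>
    (fourier (m i)).continuous.comp (continuous_apply i)

lemma tchar_apply {k : ℕ} (m : Fin k → ℤ) (u : Fin k → AddCircle (1:ℝ)) :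
    tchar m u = ∏ i, fourier (m i) (u i) := rfl

lemma tchar_pt_add {k : ℕ} (m : Fin k → ℤ) (u v : Fin k → AddCircle (1:ℝ)) :
    tchar m (u + v) = tchar m u * tchar m v := by
  simp only [tchar_apply, Pi.add_apply, fourier_pt_add, Finset.prod_mul_distrib]

lemma tchar_mul {k : ℕ} (m m' : Fin k → ℤ) :
    tchar m * tchar m' = tchar (m + m') := by
  ext u
  simp only [ContinuousMap.mul_apply, tchar_apply, Pi.add_apply, fourier_add,
    Finset.prod_mul_distrib]

lemma tchar_zero {k : ℕ} : tchar (0 : Fin k → ℤ) = 1 := by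
  ext u
  simp [tchar_apply, fourier_zero]

lemma tchar_star {k : ℕ} (m : Fin k → ℤ) : star (tchar m) = tchar (-m) := by
  ext u
  simp only [ContinuousMap.star_apply, tchar_apply, Pi.neg_apply, fourier_neg]
  rw [RCLike.star_def, map_prod]

lemma tchar_orbit {k : ℕ} (m : Fin k → ℤ) (γ : Fin k → ℝ) (y : ℝ) :
    tchar m (orbitHom γ y) = Complex.exp (2 * π * I * y * (∑ i, (m i : ℝ) * γ i)) := by
  have h0 : tchar m (orbitHom γ y) = ∏ i, fourier (m i) (((y * γ i : ℝ) : AddCircle (1:ℝ))) := rfl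
  rw [h0]
  simp only [fourier_coe_apply]
  rw [← Complex.exp_sum]
  congr 1
  push_cast
  rw [Finset.mul_sum]
  refine Finset.sum_congr rfl fun i _ => by ring

lemma sum_eq_zero_of_exp {c : ℝ}
    (h : ∀ y : ℝ, Complex.exp (2 * π * I * y * c) = 1) : c = 0 := by
  by_contra hc
  have h2 := h (1 / (2 * c))
  have hcc : (c : ℂ) ≠ 0 := Complex.ofReal_ne_zero.mpr hc
  have h3 : (2 * (π : ℂ) * I * ((1 / (2 * c) : ℝ) : ℂ) * (c : ℂ)) = π * I := by
    push_cast
    field_simp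
  rw [h3, Complex.exp_pi_mul_I] at h2
  norm_num at h2

/-- `tchar m` equals `1` on the closure of the orbit of `γ` as soon as `∑ mᵢ γᵢ = 0`. -/
lemma tchar_eq_one_of_mem {k : ℕ} (m : Fin k → ℤ) (γ : Fin k → ℝ)
    (hres : (∑ i, (m i : ℝ) * γ i) = 0) {x : Fin k → AddCircle (1:ℝ)}
    (hx : x ∈ torusSubgroup γ) : tchar m x = 1 := by
  have hcl : IsClosed {u : Fin k → AddCircle (1:ℝ) | tchar m u = 1} :=
    isClosed_eq (tchar m).continuous continuous_const
  have hsub : ((orbitHom γ).range : Set (Fin k → AddCircle (1:ℝ)))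
      ⊆ {u | tchar m u = 1} := by
    rintro - ⟨y, rfl⟩
    simp [tchar_orbit, hres]
  have hmem : x ∈ closure ((orbitHom γ).range : Set (Fin k → AddCircle (1:ℝ))) := by
    rw [← AddSubgroup.topologicalClosure_coe]
    exact hx
  exact closure_minimal hsub hcl hmem

variable {M N : ℕ}

abbrev XX (M N : ℕ) := (Fin M → AddCircle (1:ℝ)) × (Fin N → AddCircle (1:ℝ))

instance instOMS2 : OpensMeasurableSpace (XX M N × XX M N) := Prod.opensMeasurableSpace
instance instBS2 : BorelSpace (XX M N × XX M N) := Prod.borelSpace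
instance instMA2 : MeasurableAdd₂ (XX M N) := ⟨continuous_add.measurable⟩

/-- The character of `𝕋^M × 𝕋^N` attached to `(m,n)`. -/
def pchar (m : Fin M → ℤ) (n : Fin N → ℤ) : C(XX M N, ℂ) where
  toFun p := tchar m p.1 * tchar n p.2
  continuous_toFun := ((tchar m).continuous.comp continuous_fst).mul
    ((tchar n).continuous.comp continuous_snd)

lemma pchar_apply (m : Fin M → ℤ) (n : Fin N → ℤ) (p : XX M N) :
    pchar m n p = tchar m p.1 * tchar n p.2 := rfl

lemma pchar_pt_add (m : Fin M → ℤ) (n : Fin N → ℤ) (p q : XX M N) :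
    pchar m n (p + q) = pchar m n p * pchar m n q := by
  simp only [pchar_apply, Prod.fst_add, Prod.snd_add, tchar_pt_add]
  ring

lemma pchar_mul (m m' : Fin M → ℤ) (n n' : Fin N → ℤ) :
    pchar m n * pchar m' n' = pchar (m + m') (n + n') := by
  ext p
  simp only [ContinuousMap.mul_apply, pchar_apply, ← tchar_mul]
  simp [mul_comm, mul_assoc, mul_left_comm]

lemma pchar_zero : (pchar 0 0 : C(XX M N, ℂ)) = 1 := by
  ext p
  simp [pchar_apply, tchar_zero]

lemma pchar_star (m : Fin M → ℤ) (n : Fin N → ℤ) :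
    star (pchar m n) = pchar (-m) (-n) := by
  ext p
  simp only [ContinuousMap.star_apply, pchar_apply, ← tchar_star, star_mul']

lemma tchar_single {k : ℕ} (i : Fin k) (u : Fin k → AddCircle (1:ℝ)) :
    tchar (Pi.single i 1) u = fourier 1 (u i) := by
  rw [tchar_apply]
  rw [Fintype.prod_eq_single i (fun j hj => by
    rw [Pi.single_eq_of_ne hj]; exact fourier_zero)]
  rw [Pi.single_eq_same]

/-- The set of characters of `𝕋^M × 𝕋^N`. -/
def pcharSet (M N : ℕ) : Set C(XX M N, ℂ) :=
  Set.range fun p : (Fin M → ℤ) × (Fin N → ℤ) => pchar p.1 p.2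

/-- The star subalgebra generated by the characters. -/
def pSubalgebra (M N : ℕ) : StarSubalgebra ℂ C(XX M N, ℂ) where
  toSubalgebra := Algebra.adjoin ℂ (pcharSet M N)
  star_mem' := by
    show Algebra.adjoin ℂ (pcharSet M N) ≤ star (Algebra.adjoin ℂ (pcharSet M N))
    refine Algebra.adjoin_le ?_
    rintro - ⟨⟨m, n⟩, rfl⟩
    exact Algebra.subset_adjoin ⟨(-m, -n), by simp [← pchar_star]⟩

lemma pSubalgebra_coe :
    Subalgebra.toSubmodule (pSubalgebra M N).toSubalgebra
      = Submodule.span ℂ (pcharSet M N) := by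
  apply Algebra.adjoin_eq_span_of_subset
  refine Set.Subset.trans ?_ Submodule.subset_span
  intro x hx
  refine Submonoid.closure_induction (fun _ => id) ⟨(0, 0), by exact pchar_zero⟩ ?_ hx
  rintro - - - - ⟨⟨m, n⟩, rfl⟩ ⟨⟨m', n'⟩, rfl⟩
  exact ⟨(m + m', n + n'), (pchar_mul m m' n n').symm⟩

lemma pSubalgebra_separatesPoints : (pSubalgebra M N).SeparatesPoints := by
  intro p q hpq
  have hne : p.1 ≠ q.1 ∨ p.2 ≠ q.2 := by
    by_contra h
    push_neg at h
    exact hpq (Prod.ext h.1 h.2)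
  have key : ∀ (x y : AddCircle (1:ℝ)), x ≠ y → fourier 1 x ≠ fourier 1 y := by
    intro x y hxy
    rw [fourier_one, fourier_one]
    intro h
    rw [Circle.coe_inj] at h
    exact hxy (AddCircle.injective_toCircle one_ne_zero h)
  rcases hne with h1 | h2
  · obtain ⟨i, hi⟩ := Function.ne_iff.mp h1
    refine ⟨_, ⟨pchar (Pi.single i 1) 0, Algebra.subset_adjoin ⟨(Pi.single i 1, 0), rfl⟩, rfl⟩, ?_⟩
    simp only [pchar_apply, tchar_zero, tchar_single, ContinuousMap.one_apply, mul_one]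
    exact key _ _ hi
  · obtain ⟨j, hj⟩ := Function.ne_iff.mp h2
    refine ⟨_, ⟨pchar 0 (Pi.single j 1), Algebra.subset_adjoin ⟨(0, Pi.single j 1), rfl⟩, rfl⟩, ?_⟩
    simp only [pchar_apply, tchar_zero, tchar_single, ContinuousMap.one_apply, one_mul]
    exact key _ _ hj

lemma pSubalgebra_closure_eq_top : (pSubalgebra M N).topologicalClosure = ⊤ :=
  ContinuousMap.starSubalgebra_topologicalClosure_eq_top_of_separatesPoints _
    pSubalgebra_separatesPoints

lemma span_pchar_closure_eq_top :
    (Submodule.span ℂ (pcharSet M N)).topologicalClosure = ⊤ := by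
  rw [← pSubalgebra_coe]
  exact congr_arg (Subalgebra.toSubmodule <| StarSubalgebra.toSubalgebra ·)
    pSubalgebra_closure_eq_top

/-! ### Existence of normalized Haar measure on closed subgroups -/

theorem exists_isHaarOn (H : AddSubgroup (XX M N)) (hH : IsClosed (H : Set (XX M N))) :
    ∃ μ : Measure (XX M N), IsHaarOn H μ := by
  haveI : CompactSpace H := isCompact_iff_compactSpace.mp hH.isCompact
  haveI : Nonempty H := ⟨0⟩
  haveI : BorelSpace H := Subtype.borelSpace (H : Set (XX M N))
  set μ0 := Measure.addHaarMeasure (⊤ : TopologicalSpace.PositiveCompacts H) with hμ0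
  have h1 : μ0 Set.univ = 1 := by
    rw [← TopologicalSpace.PositiveCompacts.coe_top]
    exact Measure.addHaarMeasure_self
  refine ⟨μ0.map Subtype.val, ⟨?_⟩, ?_, ?_⟩
  · rw [Measure.map_apply measurable_subtype_coe MeasurableSet.univ, Set.preimage_univ, h1]
  · rw [Measure.map_apply measurable_subtype_coe hH.measurableSet.compl]
    have hpre : (Subtype.val : H → XX M N) ⁻¹' (H : Set (XX M N))ᶜ = ∅ := by
      ext x; simp [x.2]
    rw [hpre, measure_empty]
  · intro a ha
    rw [Measure.map_map (measurable_add_const a) measurable_subtype_coe]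
    have hc : ((· + a) ∘ (Subtype.val : H → XX M N)) = Subtype.val ∘ (· + (⟨a, ha⟩ : H)) := rfl
    rw [hc, ← Measure.map_map measurable_subtype_coe ((continuous_add_right _).measurable)]
    congr 1
    have h2 : (· + (⟨a, ha⟩ : H)) = ((⟨a, ha⟩ : H) + ·) := by funext x; exact add_comm _ _
    rw [h2]
    exact map_add_left_eq_self μ0 _

/-! ### The membership criterion via characters -/

lemma integrable_cont (f : C(XX M N, ℂ)) (μ : Measure (XX M N)) [IsFiniteMeasure μ] :
    Integrable f μ := by
  rw [← integrableOn_univ]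
  exact f.continuous.continuousOn.integrableOn_compact isCompact_univ

theorem mem_of_annihilator {H : AddSubgroup (XX M N)} (hH : IsClosed (H : Set (XX M N)))
    {x : XX M N}
    (hx : ∀ (m : Fin M → ℤ) (n : Fin N → ℤ),
      (∀ h ∈ H, pchar m n h = 1) → pchar m n x = 1) : x ∈ H := by
  obtain ⟨μ, hμp, hμc, hμi⟩ := exists_isHaarOn H hH
  haveI := hμp
  have haex : ∀ᵐ t ∂μ, t ∈ H := by rw [MeasureTheory.ae_iff]; exact hμc
  -- translation by an element of `H` does not change integrals
  have hInv : ∀ (f : C(XX M N, ℂ)) (a : XX M N), a ∈ H →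
      ∫ t, f (t + a) ∂μ = ∫ t, f t ∂μ := by
    intro f a ha
    conv_rhs => rw [← hμi a ha]
    rw [integral_map (measurable_add_const a).aemeasurable
      f.continuous.aestronglyMeasurable]
  -- Step A: for every continuous f, ∫ f(t+x) dμ = ∫ f dμ
  have key : ∀ f : C(XX M N, ℂ), ∫ t, f (t + x) ∂μ = ∫ t, f t ∂μ := by
    -- first for characters
    have hchar : ∀ (m : Fin M → ℤ) (n : Fin N → ℤ),
        ∫ t, pchar m n (t + x) ∂μ = ∫ t, pchar m n t ∂μ := by
      intro m n
      by_cases hann : ∀ h ∈ H, pchar m n h = 1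
      · have hx1 := hx m n hann
        refine integral_congr_ae (Filter.Eventually.of_forall fun t => ?_)
        simp only [pchar_pt_add, hx1, mul_one]
      · push_neg at hann
        obtain ⟨h0, hh0, hne⟩ := hann
        have hzero : ∫ t, pchar m n t ∂μ = 0 := by
          have h1 : ∫ t, pchar m n (t + h0) ∂μ = ∫ t, pchar m n t ∂μ := hInv _ _ hh0
          have h2 : ∫ t, pchar m n (t + h0) ∂μ
              = (pchar m n h0) * ∫ t, pchar m n t ∂μ := by
            rw [← integral_const_mul]
            refine integral_congr_ae (Filter.Eventually.of_forall fun t => ?_)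
            simp only [pchar_pt_add]; ring
          have h4 := h1.symm.trans h2
          have h3 : (pchar m n h0 - 1) * ∫ t, pchar m n t ∂μ = 0 := by
            rw [sub_mul, one_mul, ← h4, sub_self]
          rcases mul_eq_zero.mp h3 with h5 | h5
          · exact absurd (by linear_combination h5) hne
          · exact h5
        have hshift : ∫ t, pchar m n (t + x) ∂μ
            = (pchar m n x) * ∫ t, pchar m n t ∂μ := by
          rw [← integral_const_mul]
          refine integral_congr_ae (Filter.Eventually.of_forall fun t => ?_)
          simp only [pchar_pt_add]; ring
        rw [hshift, hzero, mul_zero]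
    -- extend to the linear span
    have hspan : ∀ f ∈ Submodule.span ℂ (pcharSet M N),
        ∫ t, f (t + x) ∂μ = ∫ t, f t ∂μ := by
      intro f hf
      induction hf using Submodule.span_induction with
      | mem f hf => obtain ⟨⟨m, n⟩, rfl⟩ := hf; exact hchar m n
      | zero => simp
      | add f g _ _ hf hg =>
          have hif : Integrable (fun t => f (t + x)) μ :=
            integrable_cont (f.comp ⟨_, continuous_add_right x⟩) μ
          have hig : Integrable (fun t => g (t + x)) μ :=
            integrable_cont (g.comp ⟨_, continuous_add_right x⟩) μ
          simp only [ContinuousMap.add_apply]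
          rw [integral_add hif hig, integral_add (integrable_cont f μ) (integrable_cont g μ),
            hf, hg]
      | smul c f _ hf =>
          simp only [ContinuousMap.smul_apply]
          rw [integral_smul, integral_smul, hf]
    -- extend to the closure, i.e. to everything
    intro f
    have hf_mem : f ∈ closure ((Submodule.span ℂ (pcharSet M N)) : Set C(XX M N, ℂ)) := by
      have h := span_pchar_closure_eq_top (M := M) (N := N)
      have h2 : f ∈ (Submodule.span ℂ (pcharSet M N)).topologicalClosure := by
        rw [h]; trivial
      exact h2
    have hbound : ∀ (φ : XX M N → ℂ) (C : ℝ), (∀ t, ‖φ t‖ ≤ C) → ‖∫ t, φ t ∂μ‖ ≤ C := by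
      intro φ C hC
      have hb := norm_integral_le_of_norm_le_const (μ := μ) (C := C)
        (Filter.Eventually.of_forall hC)
      simpa [measure_univ] using hb
    have hdiff : ∀ ε > 0, ‖(∫ t, f (t + x) ∂μ) - ∫ t, f t ∂μ‖ ≤ 2 * ε := by
      intro ε hε
      obtain ⟨g, hgspan, hgdist⟩ := Metric.mem_closure_iff.mp hf_mem ε hε
      have hgs := hspan g hgspan
      have hpt : ∀ p : XX M N, ‖f p - g p‖ ≤ ε := by
        intro p
        have h1 : dist (f p) (g p) ≤ dist f g := ContinuousMap.dist_apply_le_dist p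
        rw [dist_eq_norm] at h1
        exact h1.trans hgdist.le
      have int1 : ‖(∫ t, f (t + x) ∂μ) - ∫ t, g (t + x) ∂μ‖ ≤ ε := by
        have hif : Integrable (fun t => f (t + x)) μ :=
          integrable_cont (f.comp ⟨_, continuous_add_right x⟩) μ
        have hig : Integrable (fun t => g (t + x)) μ :=
          integrable_cont (g.comp ⟨_, continuous_add_right x⟩) μ
        rw [← integral_sub hif hig]
        exact hbound _ _ fun t => hpt (t + x)
      have int2 : ‖(∫ t, g t ∂μ) - ∫ t, f t ∂μ‖ ≤ ε := by
        have hig : Integrable (fun t => g t) μ := integrable_cont g μ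
        have hif : Integrable (fun t => f t) μ := integrable_cont f μ
        rw [← integral_sub hig hif]
        refine hbound _ _ fun t => ?_
        rw [norm_sub_rev]
        exact hpt t
      calc ‖(∫ t, f (t + x) ∂μ) - ∫ t, f t ∂μ‖
          = ‖((∫ t, f (t + x) ∂μ) - ∫ t, g (t + x) ∂μ)
              + ((∫ t, g t ∂μ) - ∫ t, f t ∂μ)‖ := by rw [hgs]; congr 1; ring
        _ ≤ ‖(∫ t, f (t + x) ∂μ) - ∫ t, g (t + x) ∂μ‖
              + ‖(∫ t, g t ∂μ) - ∫ t, f t ∂μ‖ := norm_add_le _ _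
        _ ≤ 2 * ε := by linarith
    have h0 : ‖(∫ t, f (t + x) ∂μ) - ∫ t, f t ∂μ‖ = 0 := by
      by_contra h0
      have hpos : 0 < ‖(∫ t, f (t + x) ∂μ) - ∫ t, f t ∂μ‖ :=
        lt_of_le_of_ne (norm_nonneg _) (Ne.symm h0)
      have hd := hdiff (‖(∫ t, f (t + x) ∂μ) - ∫ t, f t ∂μ‖ / 4) (by positivity)
      linarith
    exact sub_eq_zero.mp (norm_eq_zero.mp h0)
  -- Step B: conclude
  by_contra hxH
  have hHcomp : IsCompact ((fun t => t + x) '' (H : Set (XX M N))) :=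
    (hH.isCompact).image (continuous_add_right x)
  have hdisj : Disjoint ((fun t => t + x) '' (H : Set (XX M N))) (H : Set (XX M N)) := by
    rw [Set.disjoint_left]
    rintro - ⟨t, ht, rfl⟩ hmem
    exact hxH (by simpa using H.sub_mem hmem ht)
  obtain ⟨g, hg0, hg1, hg01⟩ :=
    exists_continuous_zero_one_of_isCompact hHcomp hH hdisj
  set F : C(XX M N, ℂ) := ⟨fun p => (g p : ℂ), by fun_prop⟩ with hF
  have hl : ∫ t, F (t + x) ∂μ = 0 := by
    refine integral_eq_zero_of_ae ?_
    filter_upwards [haex] with t ht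
    have hgt : g (t + x) = 0 := hg0 ⟨t, ht, rfl⟩
    simp [hF, hgt]
  have hr : ∫ t, F t ∂μ = 1 := by
    have hone : ∫ t, F t ∂μ = ∫ _t, (1 : ℂ) ∂μ := by
      refine integral_congr_ae ?_
      filter_upwards [haex] with t ht
      simp [hF, hg1 ht]
    rw [hone, integral_const]
    simp
  have hcontr := key F
  rw [hl, hr] at hcontr
  norm_num at hcontr

end Stmt3Aux

/-- If the `ℚ`-spans of `{γ₁,…,γ_M}` and `{λ₁,…,λ_N}` meet only in `0`, then
`A(γ,λ) = A(γ) × A(λ)` under the identification `𝕋^{M+N} = 𝕋^M × 𝕋^N`, and the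
normalized Haar measure on `A(γ,λ)` is the product of those on `A(γ)` and `A(λ)`. -/
theorem stmt3 (M N : ℕ) (γ : Fin M → ℝ) (lam : Fin N → ℝ)
    (hdisj : Disjoint (Submodule.span ℚ (Set.range γ)) (Submodule.span ℚ (Set.range lam))) :
    torusSubgroupProd γ lam = (torusSubgroup γ).prod (torusSubgroup lam) ∧
    ∀ (ω : Measure ((Fin M → AddCircle (1 : ℝ)) × (Fin N → AddCircle (1 : ℝ))))
      (ω₁ : Measure (Fin M → AddCircle (1 : ℝ))) (ω₂ : Measure (Fin N → AddCircle (1 : ℝ))),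
      IsHaarOn (torusSubgroupProd γ lam) ω → IsHaarOn (torusSubgroup γ) ω₁ →
      IsHaarOn (torusSubgroup lam) ω₂ → ω = ω₁.prod ω₂ := by
  classical
  have hclosed : IsClosed ((torusSubgroupProd γ lam :
      AddSubgroup ((Fin M → AddCircle (1 : ℝ)) × (Fin N → AddCircle (1 : ℝ)))) :
      Set ((Fin M → AddCircle (1 : ℝ)) × (Fin N → AddCircle (1 : ℝ)))) := by
    unfold torusSubgroupProd; exact AddSubgroup.isClosed_topologicalClosure _
  have hclosed1 : IsClosed ((torusSubgroup γ : AddSubgroup (Fin M → AddCircle (1 : ℝ))) :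
      Set (Fin M → AddCircle (1 : ℝ))) := by
    unfold torusSubgroup; exact AddSubgroup.isClosed_topologicalClosure _
  have hclosed2 : IsClosed ((torusSubgroup lam : AddSubgroup (Fin N → AddCircle (1 : ℝ))) :
      Set (Fin N → AddCircle (1 : ℝ))) := by
    unfold torusSubgroup; exact AddSubgroup.isClosed_topologicalClosure _
  have heq : torusSubgroupProd γ lam = (torusSubgroup γ).prod (torusSubgroup lam) := by
    apply le_antisymm
    · refine AddSubgroup.topologicalClosure_minimal _ ?_ ?_
      · rintro - ⟨y, rfl⟩
        exact AddSubgroup.mem_prod.mpr ⟨AddSubgroup.le_topologicalClosure _ ⟨y, rfl⟩,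
          AddSubgroup.le_topologicalClosure _ ⟨y, rfl⟩⟩
      · exact hclosed1.prod hclosed2
    · rintro ⟨x, z⟩ hxz
      rw [AddSubgroup.mem_prod] at hxz
      obtain ⟨hx, hz⟩ := hxz
      refine Stmt3Aux.mem_of_annihilator hclosed ?_
      intro m n hann
      have horb : ∀ y : ℝ, Stmt3Aux.pchar m n (orbitHom γ y, orbitHom lam y) = 1 := by
        intro y
        apply hann
        exact AddSubgroup.le_topologicalClosure _ ⟨y, rfl⟩
      have hsum : (∑ i, (m i : ℝ) * γ i) + (∑ j, (n j : ℝ) * lam j) = 0 := by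
        apply Stmt3Aux.sum_eq_zero_of_exp
        intro y
        have hy := horb y
        rw [Stmt3Aux.pchar_apply, Stmt3Aux.tchar_orbit, Stmt3Aux.tchar_orbit,
          ← Complex.exp_add] at hy
        rw [← hy]
        congr 1
        push_cast
        ring
      have h1 : (∑ i, (m i : ℝ) * γ i) ∈ Submodule.span ℚ (Set.range γ) := by
        refine Submodule.sum_mem _ fun i _ => ?_
        have hsmul : (m i : ℝ) * γ i = ((m i : ℚ)) • γ i := by
          rw [Rat.smul_def]; push_cast; ring
        rw [hsmul]
        exact Submodule.smul_mem _ _ (Submodule.subset_span ⟨i, rfl⟩)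
      have h2 : (∑ j, (n j : ℝ) * lam j) ∈ Submodule.span ℚ (Set.range lam) := by
        refine Submodule.sum_mem _ fun j _ => ?_
        have hsmul : (n j : ℝ) * lam j = ((n j : ℚ)) • lam j := by
          rw [Rat.smul_def]; push_cast; ring
        rw [hsmul]
        exact Submodule.smul_mem _ _ (Submodule.subset_span ⟨j, rfl⟩)
      have hz1 : (∑ i, (m i : ℝ) * γ i) = 0 := by
        refine Submodule.disjoint_def.mp hdisj _ h1 ?_
        have hrw : (∑ i, (m i : ℝ) * γ i) = -(∑ j, (n j : ℝ) * lam j) := by linarith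
        rw [hrw]
        exact Submodule.neg_mem _ h2
      have hz2 : (∑ j, (n j : ℝ) * lam j) = 0 := by linarith
      rw [Stmt3Aux.pchar_apply]
      rw [Stmt3Aux.tchar_eq_one_of_mem m γ hz1 hx, Stmt3Aux.tchar_eq_one_of_mem n lam hz2 hz,
        mul_one]
  refine ⟨heq, ?_⟩
  intro ω ω₁ ω₂ hω h1 h2
  rw [heq] at hω
  obtain ⟨hp1, hc1, hi1⟩ := h1
  obtain ⟨hp2, hc2, hi2⟩ := h2
  haveI := hp1; haveI := hp2
  have hprod : IsHaarOn ((torusSubgroup γ).prod (torusSubgroup lam)) (ω₁.prod ω₂) := by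
    refine ⟨inferInstance, ?_, ?_⟩
    · have hceq : ((((torusSubgroup γ).prod (torusSubgroup lam)) :
          Set ((Fin M → AddCircle (1 : ℝ)) × (Fin N → AddCircle (1 : ℝ)))))ᶜ
          ⊆ (((torusSubgroup γ : AddSubgroup (Fin M → AddCircle (1 : ℝ))) :
              Set (Fin M → AddCircle (1 : ℝ)))ᶜ ×ˢ Set.univ)
            ∪ (Set.univ ×ˢ ((torusSubgroup lam : AddSubgroup (Fin N → AddCircle (1 : ℝ))) :
              Set (Fin N → AddCircle (1 : ℝ)))ᶜ) := by
        intro p hp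
        by_cases hpa : p.1 ∈ torusSubgroup γ
        · right
          refine ⟨Set.mem_univ _, ?_⟩
          intro hpb
          exact hp (AddSubgroup.mem_prod.mpr ⟨hpa, hpb⟩)
        · left
          exact ⟨hpa, Set.mem_univ _⟩
      refine measure_mono_null hceq (measure_union_null ?_ ?_)
      · rw [Measure.prod_prod, hc1, zero_mul]
      · rw [Measure.prod_prod, hc2, mul_zero]
    · rintro ⟨a, b⟩ hab
      rw [AddSubgroup.mem_prod] at hab
      have hmap : (· + ((a, b) : (Fin M → AddCircle (1 : ℝ)) × (Fin N → AddCircle (1 : ℝ))))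
          = Prod.map (· + a) (· + b) := rfl
      rw [hmap, ← Measure.map_prod_map _ _ (measurable_add_const a) (measurable_add_const b),
        hi1 a hab.1, hi2 b hab.2]
  exact Stmt3Aux.haar_unique hω hprod

end
end

section
/- Let N ≥ 1 and γ₁,…,γ_N ∈ ℝ. The following are equivalent: (i) for every (k₁,…,k_N) ∈ ℤ^N with k₁γ₁ + … + k_Nγ_N = 0, the sum k₁ + … + k_N is even; (ii) the point (1/2,…,1/2) mod ℤ^N belongs to A(γ₁,…,γ_N). -/
noncomputable section

namespace Scratch
variable {N : ℕ} (γ : Fin N → ℝ)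

/-- The subgroup `ℝγ + ℤ^N` of `ℝ^N`. -/
def lineLat : AddSubgroup (Fin N → ℝ) :=
  AddMonoidHom.range (AddMonoidHom.mk'
    (fun p : ℝ × (Fin N → ℤ) => p.1 • γ + fun i => ((p.2 i : ℝ)))
    (by intro a b; funext i; simp [add_smul]; push_cast; ring))

lemma mem_lineLat {x : Fin N → ℝ} :
    x ∈ lineLat γ ↔ ∃ y : ℝ, ∃ m : Fin N → ℤ, x = y • γ + fun i => ((m i : ℝ)) := by
  constructor
  · rintro ⟨⟨y, m⟩, rfl⟩; exact ⟨y, m, rfl⟩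
  · rintro ⟨y, m, rfl⟩; exact ⟨(y, m), rfl⟩

def lineClosure : AddSubgroup (Fin N → ℝ) := (lineLat γ).topologicalClosure

/-- Bridge: membership in the torus closure is membership in the closure of `ℝγ + ℤ^N`. -/
lemma mem_torus_iff (x : Fin N → ℝ) :
    (fun i => ((x i : ℝ) : AddCircle (1 : ℝ))) ∈ torusSubgroup γ ↔ x ∈ lineClosure γ := by
  set π : (Fin N → ℝ) → (Fin N → AddCircle (1 : ℝ)) :=
    fun x i => ((x i : ℝ) : AddCircle (1 : ℝ)) with hπ
  have hπq : IsOpenQuotientMap π :=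
    IsOpenQuotientMap.piMap (fun i => QuotientAddGroup.isOpenQuotientMap_mk)
  have hpre : π ⁻¹' (Set.range (orbitHom γ)) = (lineLat γ : Set (Fin N → ℝ)) := by
    ext z
    simp only [Set.mem_preimage, Set.mem_range, SetLike.mem_coe, mem_lineLat]
    constructor
    · rintro ⟨y, hy⟩
      rw [funext_iff] at hy
      have h : ∀ i, ∃ m : ℤ, z i = y * γ i + m := by
        intro i
        have := hy i
        simp only [orbitHom, AddMonoidHom.coe_mk, ZeroHom.coe_mk, hπ] at this
        rw [QuotientAddGroup.eq] at this
        obtain ⟨m, hm⟩ := this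
        exact ⟨m, by have := hm; simp at this; linarith [this]⟩
      choose m hm using h
      exact ⟨y, m, by funext i; simp [hm i]⟩
    · rintro ⟨y, m, rfl⟩
      refine ⟨y, ?_⟩
      funext i
      simp only [orbitHom, AddMonoidHom.coe_mk, ZeroHom.coe_mk, hπ, Pi.add_apply,
        Pi.smul_apply, smul_eq_mul]
      rw [QuotientAddGroup.eq]
      exact ⟨m i, by simp⟩
  have key := (hπq.isOpenMap.preimage_closure_eq_closure_preimage hπq.continuous
    (Set.range (orbitHom γ)))
  constructor
  · intro h
    have : π x ∈ closure (Set.range (orbitHom γ)) := h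
    have : x ∈ π ⁻¹' closure (Set.range (orbitHom γ)) := this
    rw [key, hpre] at this
    exact this
  · intro h
    have : x ∈ closure ((lineLat γ : Set (Fin N → ℝ))) := h
    rw [← hpre, ← key] at this
    exact this


lemma even_of_mem (h : (fun _ : Fin N => (1:ℝ)/2) ∈ lineClosure γ) :
    ∀ k : Fin N → ℤ, ∑ i, (k i : ℝ) * γ i = 0 → 2 ∣ ∑ i, k i := by
  intro k hk
  set f : (Fin N → ℝ) → ℝ := fun x => ∑ i, (k i : ℝ) * x i with hf
  have hfc : Continuous f := by
    apply continuous_finset_sum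
    intro i _
    exact continuous_const.mul (continuous_apply i)
  have hS : IsClosed (f ⁻¹' (Set.range ((↑) : ℤ → ℝ))) :=
    Int.isClosedEmbedding_coe_real.isClosed_range.preimage hfc
  have hsub : (lineLat γ : Set (Fin N → ℝ)) ⊆ f ⁻¹' (Set.range ((↑) : ℤ → ℝ)) := by
    rintro x hx
    rw [SetLike.mem_coe, mem_lineLat] at hx
    obtain ⟨y, m, rfl⟩ := hx
    refine ⟨∑ i, k i * m i, ?_⟩
    push_cast
    simp only [hf, Pi.add_apply, Pi.smul_apply, smul_eq_mul, mul_add]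
    rw [Finset.sum_add_distrib]
    have : ∑ x : Fin N, (k x : ℝ) * (y * γ x) = 0 := by
      have : ∑ x : Fin N, (k x : ℝ) * (y * γ x) = y * ∑ x : Fin N, (k x : ℝ) * γ x := by
        rw [Finset.mul_sum]; congr 1; funext x; ring
      rw [this, hk, mul_zero]
    rw [this, zero_add]
  have hcl : closure (lineLat γ : Set (Fin N → ℝ)) ⊆ f ⁻¹' (Set.range ((↑) : ℤ → ℝ)) :=
    closure_minimal hsub hS
  obtain ⟨z, hz⟩ := hcl h
  have : (∑ i, (k i:ℝ)) / 2 = z := by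
    rw [hz, hf]
    rw [Finset.sum_div]
    congr 1; funext i; ring
  refine ⟨z, ?_⟩
  have : (∑ i, (k i : ℝ)) = 2 * z := by linarith
  push_cast at this
  exact_mod_cast this


open Filter Topology in
lemma discrete_sep {E : Type*} [NormedAddCommGroup E] [NormedSpace ℝ E]
    [FiniteDimensional ℝ E] [ProperSpace E]
    (C : AddSubgroup E) (hC : IsClosed (C : Set E))
    (V W : Submodule ℝ E) (hVW : IsCompl V W)
    (hV : ∀ x : E, (∀ t : ℝ, t • x ∈ C) → x ∈ V) :
    ∃ ε : ℝ, 0 < ε ∧ ∀ x : E, x ∈ C → x ∈ W → ‖x‖ < ε → x = 0 := by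
  by_contra hcon
  push_neg at hcon
  have h : ∀ n : ℕ, ∃ x : E, x ∈ C ∧ x ∈ W ∧ ‖x‖ < 1/(n+1) ∧ x ≠ 0 := by
    intro n
    obtain ⟨x, hxC, hxW, hxn, hx0⟩ := hcon (1/(n+1)) (by positivity)
    exact ⟨x, hxC, hxW, hxn, hx0⟩
  choose d hdC hdW hdn hd0 using h
  set u : ℕ → E := fun n => ‖d n‖⁻¹ • d n with hu_def
  have hnorm : ∀ n, ‖d n‖ ≠ 0 := fun n => norm_ne_zero_iff.mpr (hd0 n)
  have hu : ∀ n, u n ∈ Metric.sphere (0:E) 1 := by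
    intro n
    simp only [Metric.mem_sphere, dist_zero_right, hu_def, norm_smul, norm_inv, norm_norm]
    exact inv_mul_cancel₀ (hnorm n)
  obtain ⟨u₀, hu₀, φ, hφ, hconv⟩ := (isCompact_sphere (0:E) 1).tendsto_subseq hu
  have hdpos : ∀ n, 0 < ‖d n‖ := fun n => (hnorm n).lt_of_le' (norm_nonneg _)
  -- ‖d (φ n)‖ → 0
  have hdlim : Tendsto (fun n => ‖d (φ n)‖) atTop (𝓝 0) := by
    apply squeeze_zero (fun n => norm_nonneg _) (fun n => (hdn (φ n)).le.trans ?_)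
    · exact tendsto_one_div_add_atTop_nhds_zero_nat
    · gcongr
      exact_mod_cast hφ.id_le n
  -- u₀ ∈ V
  have hu₀V : u₀ ∈ V := by
    apply hV
    intro t
    have hterm : ∀ n, (⌊t / ‖d (φ n)‖⌋ : ℤ) • d (φ n) ∈ C :=
      fun n => zsmul_mem (hdC (φ n)) _
    have htend : Tendsto (fun n => (⌊t / ‖d (φ n)‖⌋ : ℤ) • d (φ n)) atTop (𝓝 (t • u₀)) := by
      have hrw : ∀ n, (⌊t / ‖d (φ n)‖⌋ : ℤ) • d (φ n)
          = ((⌊t / ‖d (φ n)‖⌋ : ℝ) * ‖d (φ n)‖) • u (φ n) := by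
        intro n
        rw [hu_def]
        rw [smul_smul, mul_assoc, mul_inv_cancel₀ (hnorm (φ n)), mul_one,
          Int.cast_smul_eq_zsmul]
      simp_rw [hrw]
      refine Tendsto.smul ?_ hconv
      -- scalar tends to t
      have habs : ∀ n, |(⌊t / ‖d (φ n)‖⌋ : ℝ) * ‖d (φ n)‖ - t| ≤ ‖d (φ n)‖ := by
        intro n
        set r := ‖d (φ n)‖ with hr
        set a := t / r with ha
        have ht : t = a * r := by
          rw [ha, div_mul_cancel₀]
          exact hnorm (φ n)
        have h1 : (⌊a⌋ : ℝ) * r - t = -(Int.fract a * r) := by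
          simp only [Int.fract]
          linarith [ht]
        rw [h1, abs_neg]
        rw [abs_of_nonneg (mul_nonneg (Int.fract_nonneg a) (hdpos (φ n)).le)]
        calc Int.fract a * r ≤ 1 * r :=
              mul_le_mul_of_nonneg_right (Int.fract_lt_one a).le (hdpos (φ n)).le
          _ = r := one_mul r
      have : Tendsto (fun n => (⌊t / ‖d (φ n)‖⌋ : ℝ) * ‖d (φ n)‖ - t) atTop (𝓝 0) := by
        apply squeeze_zero_norm habs hdlim
      have := this.add_const t
      simpa using this
    exact hC.mem_of_tendsto htend (Filter.Eventually.of_forall hterm)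
  -- u₀ ∈ W
  have hu₀W : u₀ ∈ W := by
    have hWc : IsClosed (W : Set E) := W.closed_of_finiteDimensional
    apply hWc.mem_of_tendsto hconv
    apply Filter.Eventually.of_forall
    intro n
    exact W.smul_mem _ (hdW (φ n))
  have : u₀ = 0 := by
    have := hVW.disjoint
    exact (Submodule.disjoint_def.mp this) u₀ hu₀V hu₀W
  rw [this] at hu₀
  simp at hu₀


lemma lineLat_le : lineLat γ ≤ lineClosure γ := (lineLat γ).le_topologicalClosure

lemma single_mem_lineLat (i : Fin N) :
    (fun j => if i = j then (1:ℝ) else 0) ∈ lineLat γ := by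
  rw [mem_lineLat]
  refine ⟨0, fun j => if i = j then 1 else 0, ?_⟩
  funext j
  by_cases h : i = j <;> simp [h]

open Module in
lemma mem_of_even (H : ∀ k : Fin N → ℤ, ∑ i, (k i : ℝ) * γ i = 0 → 2 ∣ ∑ i, k i) :
    (fun _ : Fin N => (1:ℝ)/2) ∈ lineClosure γ := by
  classical
  by_contra hp
  set C := lineClosure γ with hC_def
  have hCclosed : IsClosed (C : Set (Fin N → ℝ)) := (lineLat γ).isClosed_topologicalClosure
  -- the maximal subspace inside C
  set V : Submodule ℝ (Fin N → ℝ) :=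
    { carrier := {x | ∀ t : ℝ, t • x ∈ C}
      add_mem' := fun {a b} ha hb t => by
        rw [smul_add]; exact add_mem (ha t) (hb t)
      zero_mem' := fun t => by rw [smul_zero]; exact zero_mem C
      smul_mem' := fun c x hx t => by
        rw [smul_smul]; exact hx (t * c) } with hV_def
  have hVC : ∀ x ∈ V, x ∈ C := fun x hx => by simpa using hx 1
  obtain ⟨W, hW⟩ := Submodule.exists_isCompl V
  set pW : (Fin N → ℝ) →ₗ[ℝ] W := W.projectionOnto V hW.symm with hpW_def
  set pV : (Fin N → ℝ) →ₗ[ℝ] V := V.projectionOnto W hW with hpV_def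
  have hsum : ∀ x : (Fin N → ℝ), ((pV x : (Fin N → ℝ)) + (pW x : (Fin N → ℝ))) = x := fun x =>
    Submodule.projection_add_projection_eq_self hW x
  -- projections of C land in C
  have hpWC : ∀ x : (Fin N → ℝ), x ∈ C → ((pW x : (Fin N → ℝ))) ∈ C := by
    intro x hx
    have h1 : ((pW x : (Fin N → ℝ))) = x - (pV x : (Fin N → ℝ)) := eq_sub_of_add_eq' (hsum x)
    rw [h1]
    exact sub_mem hx (hVC _ (pV x).2)
  -- the "lattice part" of C inside W
  set D : Submodule ℤ ↥W :=
    { carrier := {w : ↥W | (w : (Fin N → ℝ)) ∈ C}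
      add_mem' := fun {a b} ha hb => by
        show ((a + b : ↥W) : (Fin N → ℝ)) ∈ C
        rw [Submodule.coe_add]
        exact add_mem ha hb
      zero_mem' := by
        show ((0 : ↥W) : (Fin N → ℝ)) ∈ C
        rw [ZeroMemClass.coe_zero]
        exact zero_mem C
      smul_mem' := fun z w hw => by
        show ((z • w : ↥W) : (Fin N → ℝ)) ∈ C
        rw [Submodule.coe_smul_of_tower]
        exact zsmul_mem hw z } with hD_def
  have hmemD : ∀ w : ↥W, w ∈ D ↔ (w : (Fin N → ℝ)) ∈ C := fun w => Iff.rfl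
  -- D is discrete
  obtain ⟨ε, hε, hsep⟩ := discrete_sep C hCclosed V W hW (fun x hx => hx)
  haveI hDdisc : DiscreteTopology ↥D := by
    rw [discreteTopology_iff_isOpen_singleton_zero, isOpen_induced_iff]
    refine ⟨Metric.ball 0 ε, Metric.isOpen_ball, ?_⟩
    ext d
    simp only [Set.mem_preimage, Metric.mem_ball, dist_zero_right, Set.mem_singleton_iff]
    constructor
    · intro hd
      have hnorm : ‖((d : ↥W) : (Fin N → ℝ))‖ < ε := hd
      have h1 : ((d : ↥W) : (Fin N → ℝ)) = 0 := hsep ((d : ↥W) : (Fin N → ℝ)) d.2 (d : ↥W).2 hnorm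
      have h2 : (d : ↥W) = 0 := Subtype.ext h1
      exact Subtype.ext h2
    · rintro rfl
      simpa using hε
  -- D spans W over ℝ
  have hCspan : ∀ x : (Fin N → ℝ), x ∈ Submodule.span ℝ (lineLat γ : Set (Fin N → ℝ)) := by
    intro x
    rw [pi_eq_sum_univ x]
    refine sum_mem fun i _ => Submodule.smul_mem _ _ ?_
    exact Submodule.subset_span (single_mem_lineLat γ i)
  have hspanD : Submodule.span ℝ (D : Set ↥W) = ⊤ := by
    rw [eq_top_iff]
    rintro w -
    have h1 : pW (w : (Fin N → ℝ)) ∈ Submodule.map pW (Submodule.span ℝ (lineLat γ : Set (Fin N → ℝ))) :=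
      Submodule.mem_map_of_mem (hCspan (w : (Fin N → ℝ)))
    rw [Submodule.map_span] at h1
    have h2 : Submodule.span ℝ (pW '' (lineLat γ : Set (Fin N → ℝ))) ≤ Submodule.span ℝ (D : Set ↥W) := by
      apply Submodule.span_mono
      rintro _ ⟨x, hx, rfl⟩
      exact hpWC x (lineLat_le γ hx)
    have h3 : pW (w : (Fin N → ℝ)) = w := Submodule.linearProjOfIsCompl_apply_left hW.symm w
    rw [h3] at h1
    exact h2 h1
  haveI : IsZLattice ℝ D := ⟨hspanD⟩
  haveI := ZLattice.module_finite ℝ D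
  haveI := ZLattice.module_free ℝ D
  set b : Basis (Module.Free.ChooseBasisIndex ℤ ↥D) ℤ ↥D := Module.Free.chooseBasis ℤ ↥D with hb_def
  set bR := b.ofZLatticeBasis ℝ D with hbR_def
  set phalf : (Fin N → ℝ) := (fun _ : Fin N => (1:ℝ)/2) with hphalf_def
  set q : ↥W := pW phalf with hq_def
  have hqD : q ∉ D := by
    intro hq
    apply hp
    show phalf ∈ C
    rw [← hsum phalf]
    exact add_mem (hVC _ (pV phalf).2) hq
  have hj : ∃ j, ¬ ∃ z : ℤ, bR.repr q j = (z : ℝ) := by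
    by_contra hcon
    push_neg at hcon
    choose z hz using hcon
    apply hqD
    have hmem : q ∈ Submodule.span ℤ (Set.range ⇑bR) := by
      rw [← Basis.sum_repr bR q]
      refine sum_mem fun j _ => ?_
      rw [hz j, Int.cast_smul_eq_zsmul]
      exact Submodule.smul_mem _ _ (Submodule.subset_span (Set.mem_range_self j))
    rwa [Basis.ofZLatticeBasis_span] at hmem
  obtain ⟨j, hj⟩ := hj
  set f : (Fin N → ℝ) →ₗ[ℝ] ℝ := (bR.coord j) ∘ₗ pW with hf_def
  have hfC : ∀ x : (Fin N → ℝ), x ∈ C → ∃ z : ℤ, f x = (z : ℝ) := by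
    intro x hx
    have hDx : pW x ∈ D := hpWC x hx
    refine ⟨b.repr ⟨pW x, hDx⟩ j, ?_⟩
    have h1 := Basis.ofZLatticeBasis_repr_apply ℝ D b ⟨pW x, hDx⟩ j
    show bR.repr (pW x) j = _
    rw [show ((⟨pW x, hDx⟩ : ↥D) : ↥W) = pW x from rfl] at h1
    rw [h1]
  have hk : ∀ i : Fin N, ∃ z : ℤ, f (fun j => if i = j then (1:ℝ) else 0) = (z : ℝ) :=
    fun i => hfC _ (lineLat_le γ (single_mem_lineLat γ i))
  choose k hkk using hk
  have hfsum : ∀ x : (Fin N → ℝ), f x = ∑ i, x i * (k i : ℝ) := by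
    intro x
    rw [LinearMap.pi_apply_eq_sum_univ f x]
    refine Finset.sum_congr rfl fun i _ => ?_
    rw [hkk i, smul_eq_mul]
  have hγV : γ ∈ V := by
    intro t
    exact lineLat_le γ ((mem_lineLat γ).mpr ⟨t, 0, by funext i; simp⟩)
  have hrel : ∑ i, (k i : ℝ) * γ i = 0 := by
    have h1 : f γ = 0 := by
      rw [hf_def, LinearMap.comp_apply, hpW_def,
        Submodule.projectionOnto_apply_of_mem_right hW.symm hγV, map_zero]
    rw [hfsum γ] at h1
    rw [← h1]
    exact Finset.sum_congr rfl fun i _ => mul_comm _ _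
  obtain ⟨c, hc⟩ := H k hrel
  apply hj
  refine ⟨c, ?_⟩
  have h2 : f phalf = bR.repr q j := rfl
  have h3 : f phalf = ∑ i, (1/2 : ℝ) * (k i : ℝ) := hfsum phalf
  rw [← h2, h3]
  have : (∑ i, (k i : ℝ)) = 2 * (c : ℝ) := by
    exact_mod_cast hc
  rw [← Finset.mul_sum, this]
  ring

end Scratch

/-- The following are equivalent: (i) every integer relation `k₁γ₁ + … + k_Nγ_N = 0`
has `k₁ + … + k_N` even; (ii) `(1/2,…,1/2) ∈ A(γ)`. -/
theorem stmt4 (N : ℕ) (hN : 1 ≤ N) (γ : Fin N → ℝ) :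
    (∀ k : Fin N → ℤ, ∑ i, (k i : ℝ) * γ i = 0 → 2 ∣ ∑ i, k i) ↔
      (fun _ : Fin N => (((1 : ℝ) / 2 : ℝ) : AddCircle (1 : ℝ))) ∈ torusSubgroup γ := by
  constructor
  · intro H
    exact (Scratch.mem_torus_iff γ (fun _ => (1:ℝ)/2)).mpr (Scratch.mem_of_even γ H)
  · intro h
    exact Scratch.even_of_mem γ ((Scratch.mem_torus_iff γ (fun _ => (1:ℝ)/2)).mp h)

end
end

section
/- Let N ≥ 1, let λ₁,…,λ_N be distinct positive real numbers, and let (M₁,…,M_N), (w₁,…,w_N) ∈ ℂ^N with M_j ≠ 0 for at least one j. Then the function φ : 𝕋^N → ℂ given by φ(θ₁,…,θ_N) = Σ_{j=1}^N M_j cos(2πθ_j + w_j) = Σ_{j=1}^N (M_j/2)(e^{iw_j} e^{2πiθ_j} + e^{−iw_j} e^{−2πiθ_j}) (which is well defined on 𝕋^N) is not constant on the subgroup A(λ₁,…,λ_N). -/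
open Complex

noncomputable section

/-- The additive character `y ↦ exp(a y i)` as a monoid hom on `Multiplicative ℝ`. -/
def expChar (a : ℝ) : Multiplicative ℝ →* ℂ where
  toFun y := Complex.exp (a * (Multiplicative.toAdd y) * I)
  map_one' := by simp
  map_mul' x y := by
    show Complex.exp (a * ((Multiplicative.toAdd x + Multiplicative.toAdd y : ℝ)) * I) = _
    rw [← Complex.exp_add]
    push_cast
    ring_nf

lemma expChar_apply (a y : ℝ) : expChar a (Multiplicative.ofAdd y) = Complex.exp (a * y * I) := rfl

lemma expChar_inj : Function.Injective expChar := by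
  intro a b h
  by_contra hab
  have hne : a - b ≠ 0 := sub_ne_zero.mpr hab
  set c : ℝ := Real.pi / (a - b) with hc
  have h1 : expChar a (Multiplicative.ofAdd c) = expChar b (Multiplicative.ofAdd c) := by rw [h]
  rw [expChar_apply, expChar_apply] at h1
  have h2 : Complex.exp ((a:ℂ) * c * I) = Complex.exp ((b:ℂ) * c * I) * Complex.exp (((a:ℂ)-b) * c * I) := by
    rw [← Complex.exp_add]; ring_nf
  have h3 : ((a:ℂ) - b) * c = Real.pi := by
    rw [hc]
    have hne' : ((a:ℂ) - b) ≠ 0 := by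
      simpa using (sub_ne_zero.mpr (fun hh : (a:ℂ) = b => hab (by exact_mod_cast hh)))
    push_cast
    field_simp
  rw [h3] at h2
  rw [Complex.exp_pi_mul_I] at h2
  rw [h1] at h2
  have := Complex.exp_ne_zero ((b:ℂ) * c * I)
  have h4 : (2:ℂ) * Complex.exp ((b:ℂ) * c * I) = 0 := by linear_combination h2
  simp [this] at h4

lemma toCircle_coe (x : ℝ) :
    ((AddCircle.toCircle ((x:ℝ) : AddCircle (1:ℝ))) : ℂ) = Complex.exp (2*Real.pi*x*I) := by
  rw [AddCircle.toCircle_apply_mk]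
  simp [Circle.coe_exp]

/-- The function `φ(θ) = Σ_j M_j cos(2πθ_j + w_j)
= Σ_j (M_j/2)(e^{iw_j} e^{2πiθ_j} + e^{-iw_j} e^{-2πiθ_j})`, well defined on `𝕋^N`. -/
def phiTrig {N : ℕ} (M w : Fin N → ℂ) (θ : Fin N → AddCircle (1 : ℝ)) : ℂ :=
  ∑ j, (M j / 2) * (Complex.exp (I * w j) * ((θ j).toCircle : ℂ) +
    Complex.exp (-I * w j) * ((θ j).toCircle : ℂ)⁻¹)

lemma phi_orbit {N : ℕ} (M w : Fin N → ℂ) (lam : Fin N → ℝ) (y : ℝ) :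
    phiTrig M w (orbitHom lam y) =
      ∑ j, ((M j / 2) * Complex.exp (I * w j) * expChar (2*Real.pi*lam j) (Multiplicative.ofAdd y)
        + (M j / 2) * Complex.exp (-I * w j) * expChar (-(2*Real.pi*lam j)) (Multiplicative.ofAdd y)) := by
  unfold phiTrig orbitHom
  refine Finset.sum_congr rfl (fun j _ => ?_)
  simp only [AddMonoidHom.coe_mk, ZeroHom.coe_mk, expChar_apply, toCircle_coe, ← Complex.exp_neg]
  have h1 : (2*(Real.pi:ℂ)*((y*lam j : ℝ):ℂ)*I) = ((2*Real.pi*lam j : ℝ) : ℂ) * y * I := by push_cast; ring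
  have h2 : (-(((2*Real.pi*lam j : ℝ):ℂ) * (y:ℂ) * I)) = ((-(2*Real.pi*lam j) : ℝ) : ℂ) * y * I := by push_cast; ring
  rw [h1, h2]
  ring

def myFreq {N : ℕ} (lam : Fin N → ℝ) : Option (Fin N ⊕ Fin N) → ℝ
  | none => 0
  | some (.inl j) => 2*Real.pi*lam j
  | some (.inr j) => -(2*Real.pi*lam j)

def myCoef {N : ℕ} (M w : Fin N → ℂ) (C : ℂ) : Option (Fin N ⊕ Fin N) → ℂ
  | none => -C
  | some (.inl j) => (M j / 2) * Complex.exp (I * w j)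
  | some (.inr j) => (M j / 2) * Complex.exp (-I * w j)

/-- For distinct positive `λ₁,…,λ_N` and coefficients `M_j` not all zero, the function
`φ(θ) = Σ_j M_j cos(2πθ_j + w_j)` is not constant on `A(λ₁,…,λ_N)`. -/
theorem stmt5 (N : ℕ) (hN : 1 ≤ N) (lam : Fin N → ℝ)
    (hpos : ∀ j, 0 < lam j) (hinj : Function.Injective lam)
    (M w : Fin N → ℂ) (hM : ∃ j, M j ≠ 0) :
    ∃ x ∈ torusSubgroup lam, ∃ y ∈ torusSubgroup lam, phiTrig M w x ≠ phiTrig M w y := by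
  by_contra hcon
  push_neg at hcon
  obtain ⟨j0, hM0⟩ := hM
  have hmem : ∀ y : ℝ, orbitHom lam y ∈ torusSubgroup lam :=
    fun y => AddSubgroup.le_topologicalClosure _ ⟨y, rfl⟩
  set C := phiTrig M w (orbitHom lam 0) with hC
  have key : ∀ y : ℝ, phiTrig M w (orbitHom lam y) = C :=
    fun y => hcon _ (hmem y) _ (hmem 0)
  -- injectivity of frequencies
  have hπ := Real.pi_pos
  have hfpos : ∀ j, 0 < 2*Real.pi*lam j := fun j => by have := hpos j; positivity
  have hfreq : Function.Injective (myFreq lam) := by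
    intro i i' h
    match i, i' with
    | none, none => rfl
    | none, some (.inl j) => exact absurd (show (0:ℝ) = 2*Real.pi*lam j from h) (ne_of_lt (hfpos j))
    | none, some (.inr j) => exact absurd (show (0:ℝ) = -(2*Real.pi*lam j) from h) (ne_of_gt (by linarith [hfpos j]))
    | some (.inl j), none => exact absurd (show 2*Real.pi*lam j = (0:ℝ) from h) (ne_of_gt (hfpos j))
    | some (.inr j), none => exact absurd (show -(2*Real.pi*lam j) = (0:ℝ) from h) (ne_of_lt (by linarith [hfpos j]))
    | some (.inl j), some (.inl j') => 
      have : lam j = lam j' := by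
        have h' : 2*Real.pi*lam j = 2*Real.pi*lam j' := h
        have h2 : (2*Real.pi) ≠ 0 := by positivity
        field_simp at h'
        exact h'
      rw [hinj this]
    | some (.inr j), some (.inr j') =>
      have : lam j = lam j' := by
        have h' : -(2*Real.pi*lam j) = -(2*Real.pi*lam j') := h
        have h2 : (2*Real.pi) ≠ 0 := by positivity
        field_simp at h'
        exact neg_inj.mp h'
      rw [hinj this]
    | some (.inl j), some (.inr j') => exact absurd (show 2*Real.pi*lam j = -(2*Real.pi*lam j') from h) (ne_of_gt (by linarith [hfpos j, hfpos j']))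
    | some (.inr j), some (.inl j') => exact absurd (show -(2*Real.pi*lam j) = 2*Real.pi*lam j' from h) (ne_of_lt (by linarith [hfpos j, hfpos j']))
  have lin : LinearIndependent ℂ (fun i => (⇑(expChar (myFreq lam i)) : Multiplicative ℝ → ℂ)) :=
    (linearIndependent_monoidHom (Multiplicative ℝ) ℂ).comp (expChar ∘ myFreq lam)
      (expChar_inj.comp hfreq)
  have hsum : ∑ i, myCoef M w C i • (⇑(expChar (myFreq lam i)) : Multiplicative ℝ → ℂ) = 0 := by
    funext z
    have hz : z = Multiplicative.ofAdd (Multiplicative.toAdd z) := rfl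
    set y := Multiplicative.toAdd z with hy
    have hyy := (phi_orbit M w lam y).symm.trans (key y)
    rw [Finset.sum_add_distrib] at hyy
    simp only [expChar_apply] at hyy
    simp only [Finset.sum_apply, Pi.smul_apply, smul_eq_mul, Pi.zero_apply,
      Fintype.sum_option, Fintype.sum_sum_type]
    rw [hz]
    simp only [myCoef, myFreq, expChar_apply]
    have h0 : Complex.exp ((0:ℝ) * y * I) = 1 := by norm_num
    rw [h0]
    linear_combination hyy
  have hzero := Fintype.linearIndependent_iff.mp lin (myCoef M w C) hsum (some (.inl j0))
  simp only [myCoef] at hzero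
  exact mul_ne_zero (div_ne_zero hM0 two_ne_zero) (Complex.exp_ne_zero _) hzero


end
end
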